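/- Assume the generalised Hamiltonian GBDT setup, together with A·S(0) − S(0)·A* = i·Π(0)·j·Π(0)*, S(0) = S(0)*, and S(x) invertible for all x in an interval 𝓘 containing 0; define w_A, β̃ₖ, H̃ₖ as in Theorem 3.1. Then for every x ∈ 𝓘 the function x ↦ j·Π(x)*·S(x)⁻¹ is differentiable and (j·Π(x)*·S(x)⁻¹)′ = i·Σ_{k=1}^r j·H̃ₖ(x)·j·Π(x)*·S(x)⁻¹·(A − cₖIₙ)⁻¹. -/

import Mathlib

open Matrix

attribute [local instance] Matrix.normedAddCommGroup Matrix.normedSpace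

/-- The signature matrix `j = diag(I_{m₁}, −I_{m₂})`. -/
def Jmat (m₁ m₂ : ℕ) : Matrix (Fin m₁ ⊕ Fin m₂) (Fin m₁ ⊕ Fin m₂) ℂ :=
  Matrix.fromBlocks 1 0 0 (-1)

section helpers

variable {ι κ τ : Type*} [Fintype ι] [Fintype κ] [Fintype τ]

theorem hasDerivAt_matrix {F : ℝ → Matrix ι κ ℂ} {F' : Matrix ι κ ℂ} {x : ℝ} :
    HasDerivAt F F' x ↔ ∀ i j, HasDerivAt (fun t => F t i j) (F' i j) x := by
  constructor
  · intro h i j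
    exact (hasDerivAt_pi.1 ((hasDerivAt_pi (φ := F) (φ' := F')).1 h i)) j
  · intro h
    exact hasDerivAt_pi.2 fun i => hasDerivAt_pi.2 (h i)

theorem HasDerivAt.matmul {F : ℝ → Matrix ι κ ℂ} {G : ℝ → Matrix κ τ ℂ}
    {F' : Matrix ι κ ℂ} {G' : Matrix κ τ ℂ} {x : ℝ}
    (hF : HasDerivAt F F' x) (hG : HasDerivAt G G' x) :
    HasDerivAt (fun t => F t * G t) (F' * G x + F x * G') x := by
  rw [hasDerivAt_matrix] at hF hG ⊢
  intro i j
  simp only [Matrix.mul_apply, Matrix.add_apply]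
  rw [← Finset.sum_add_distrib]
  exact HasDerivAt.fun_sum fun k _ => ((hF i k).mul (hG k j)).congr_deriv rfl

theorem HasDerivAt.conjTranspose {F : ℝ → Matrix ι κ ℂ} {F' : Matrix ι κ ℂ} {x : ℝ}
    (hF : HasDerivAt F F' x) :
    HasDerivAt (fun t => (F t)ᴴ) F'ᴴ x := by
  rw [hasDerivAt_matrix] at hF ⊢
  intro i j
  exact (hF j i).star

theorem differentiableAt_matrix {F : ℝ → Matrix ι κ ℂ} {x : ℝ}
    (h : ∀ i j, DifferentiableAt ℝ (fun t => F t i j) x) :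
    DifferentiableAt ℝ F x :=
  differentiableAt_pi.2 fun i => differentiableAt_pi.2 fun j => h i j

variable [DecidableEq ι]

theorem differentiableAt_matrix_det {M : ℝ → Matrix ι ι ℂ} {x : ℝ}
    (h : ∀ i j, DifferentiableAt ℝ (fun t => M t i j) x) :
    DifferentiableAt ℝ (fun t => (M t).det) x := by
  simp only [Matrix.det_apply']
  apply DifferentiableAt.fun_sum
  intro σ _
  apply DifferentiableAt.const_mul
  exact DifferentiableAt.fun_finsetProd (fun i _ => h (σ i) i)

theorem hasDerivAt_matrix_inv {S : ℝ → Matrix ι ι ℂ} {S' : Matrix ι ι ℂ} {x : ℝ}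
    (hS : HasDerivAt S S' x) (hx : IsUnit (S x)) :
    HasDerivAt (fun t => (S t)⁻¹) (-((S x)⁻¹ * S' * (S x)⁻¹)) x := by
  have hdet : IsUnit (S x).det := (Matrix.isUnit_iff_isUnit_det _).1 hx
  have hdet' : (S x).det ≠ 0 := hdet.ne_zero
  have hentry : ∀ i j, DifferentiableAt ℝ (fun t => S t i j) x := by
    intro i j
    exact ((hasDerivAt_matrix.1 hS) i j).differentiableAt
  have hdiff : DifferentiableAt ℝ (fun t => (S t)⁻¹) x := by
    apply differentiableAt_matrix
    intro i j
    have : (fun t => (S t)⁻¹ i j) = fun t => ((S t).det)⁻¹ * (S t).adjugate i j := by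
      funext t
      simp [Matrix.inv_def, Ring.inverse_eq_inv]
    rw [this]
    apply DifferentiableAt.mul
    · exact (differentiableAt_matrix_det hentry).inv hdet'
    · have : (fun t => (S t).adjugate i j)
          = fun t => ((S t).updateRow j (Pi.single i 1)).det := by
        funext t; rw [Matrix.adjugate_apply]
      rw [this]
      apply differentiableAt_matrix_det
      intro a b
      by_cases hab : a = j
      · subst hab; simp only [Matrix.updateRow_self]
        exact differentiableAt_const _
      · simp only [Matrix.updateRow_ne hab]
        exact hentry a b
  set F' := deriv (fun t => (S t)⁻¹) x with hF'def
  have hF' : HasDerivAt (fun t => (S t)⁻¹) F' x := hdiff.hasDerivAt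
  have heq : (fun t => S t * (S t)⁻¹) =ᶠ[nhds x] (fun _ => (1 : Matrix ι ι ℂ)) := by
    have hc : ContinuousAt (fun t => (S t).det) x :=
      (differentiableAt_matrix_det hentry).continuousAt
    filter_upwards [hc.eventually_ne hdet'] with t ht
    exact Matrix.mul_nonsing_inv _ ht.isUnit
  have h1 : HasDerivAt (fun t => S t * (S t)⁻¹) (S' * (S x)⁻¹ + S x * F') x :=
    hS.matmul hF'
  have h0 : HasDerivAt (fun t => S t * (S t)⁻¹) 0 x :=
    (hasDerivAt_const x (1 : Matrix ι ι ℂ)).congr_of_eventuallyEq heq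
  have hsum : S' * (S x)⁻¹ + S x * F' = 0 := h1.unique h0
  have hval : F' = -((S x)⁻¹ * S' * (S x)⁻¹) := by
    have h2 : S x * F' = -(S' * (S x)⁻¹) := by
      rw [eq_neg_iff_add_eq_zero, add_comm]; exact hsum
    calc F' = (S x)⁻¹ * (S x * F') := (Matrix.nonsing_inv_mul_cancel_left _ _ hdet).symm
    _ = -((S x)⁻¹ * S' * (S x)⁻¹) := by rw [h2, mul_neg, Matrix.mul_assoc]
  exact hval ▸ hF'

theorem matrix_const_of_hasDerivAt_zero {G : ℝ → Matrix ι κ ℂ}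
    (h : ∀ t, HasDerivAt G 0 t) (t : ℝ) : G t = G 0 :=
  is_const_of_deriv_eq_zero (fun s => (h s).differentiableAt) (fun s => (h s).deriv) t 0

end helpers

theorem Jmat_conjTranspose (m₁ m₂ : ℕ) : (Jmat m₁ m₂)ᴴ = Jmat m₁ m₂ := by
  simp [Jmat, Matrix.fromBlocks_conjTranspose]

theorem Jmat_mul_Jmat (m₁ m₂ : ℕ) : Jmat m₁ m₂ * Jmat m₁ m₂ = 1 := by
  simp [Jmat, Matrix.fromBlocks_multiply, ← Matrix.fromBlocks_one]

/-- The transfer matrix function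
`w_A(x,z) = I_m − i j Π(x)* S(x)⁻¹ (A − zIₙ)⁻¹ Π(x)` (formula (c8)). -/
noncomputable def wA {m₁ m₂ n : ℕ} (A : Matrix (Fin n) (Fin n) ℂ)
    (P : ℝ → Matrix (Fin n) (Fin m₁ ⊕ Fin m₂) ℂ) (S : ℝ → Matrix (Fin n) (Fin n) ℂ)
    (x : ℝ) (z : ℂ) : Matrix (Fin m₁ ⊕ Fin m₂) (Fin m₁ ⊕ Fin m₂) ℂ :=
  1 - Complex.I • (Jmat m₁ m₂ * (P x)ᴴ * (S x)⁻¹ * (A - z • 1)⁻¹ * P x)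

/-- The transformed `β̃ₖ(x) = βₖ(x) j w_A(x,cₖ)* j` (formula (c13)). -/
noncomputable def betaTil {m₁ m₂ n p r : ℕ} (c : Fin r → ℝ)
    (A : Matrix (Fin n) (Fin n) ℂ)
    (β : Fin r → ℝ → Matrix (Fin p) (Fin m₁ ⊕ Fin m₂) ℂ)
    (P : ℝ → Matrix (Fin n) (Fin m₁ ⊕ Fin m₂) ℂ) (S : ℝ → Matrix (Fin n) (Fin n) ℂ)
    (k : Fin r) (x : ℝ) : Matrix (Fin p) (Fin m₁ ⊕ Fin m₂) ℂ :=
  β k x * Jmat m₁ m₂ * (wA A P S x ((c k : ℂ)))ᴴ * Jmat m₁ m₂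

/-- The transformed Hamiltonian `H̃ₖ(x) = β̃ₖ(x)* β̃ₖ(x)` (formula (c13)). -/
noncomputable def Htil {m₁ m₂ n p r : ℕ} (c : Fin r → ℝ)
    (A : Matrix (Fin n) (Fin n) ℂ)
    (β : Fin r → ℝ → Matrix (Fin p) (Fin m₁ ⊕ Fin m₂) ℂ)
    (P : ℝ → Matrix (Fin n) (Fin m₁ ⊕ Fin m₂) ℂ) (S : ℝ → Matrix (Fin n) (Fin n) ℂ)
    (k : Fin r) (x : ℝ) : Matrix (Fin m₁ ⊕ Fin m₂) (Fin m₁ ⊕ Fin m₂) ℂ :=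
  (betaTil c A β P S k x)ᴴ * betaTil c A β P S k x

/-- auxiliary abbreviation -/
noncomputable def gW {m₁ m₂ n p r : ℕ} (c : Fin r → ℝ) (A : Matrix (Fin n) (Fin n) ℂ)
    (β : Fin r → ℝ → Matrix (Fin p) (Fin m₁ ⊕ Fin m₂) ℂ)
    (P : ℝ → Matrix (Fin n) (Fin m₁ ⊕ Fin m₂) ℂ) (k : Fin r) (t : ℝ) :
    Matrix (Fin n) (Fin m₁ ⊕ Fin m₂) ℂ :=
  (A - (c k : ℂ) • 1)⁻¹ * P t * (Jmat m₁ m₂ * ((β k t)ᴴ * β k t))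

/-- auxiliary abbreviation -/
noncomputable def gT {m₁ m₂ n p r : ℕ} (c : Fin r → ℝ) (A : Matrix (Fin n) (Fin n) ℂ)
    (β : Fin r → ℝ → Matrix (Fin p) (Fin m₁ ⊕ Fin m₂) ℂ)
    (P : ℝ → Matrix (Fin n) (Fin m₁ ⊕ Fin m₂) ℂ) (k : Fin r) (t : ℝ) :
    Matrix (Fin n) (Fin n) ℂ :=
  gW c A β P k t * Jmat m₁ m₂ * (P t)ᴴ * (Aᴴ - (c k : ℂ) • 1)⁻¹

/-- equation (d1), specialization of [SaSaR, (7.61)]. Under the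
hypotheses of Theorem 3.1, the function `x ↦ j Π(x)* S(x)⁻¹` is differentiable on `𝓘`
with `(j Π(x)* S(x)⁻¹)′ = i Σₖ j H̃ₖ(x) j Π(x)* S(x)⁻¹ (A − cₖIₙ)⁻¹`. -/
theorem gbdt_d1_equation {m₁ m₂ n p r : ℕ} (hm : 0 < m₁ + m₂) (hr : 1 ≤ r)
    (c : Fin r → ℝ) (hc : Function.Injective c)
    (A : Matrix (Fin n) (Fin n) ℂ)
    (hA : ∀ k, IsUnit (A - (c k : ℂ) • (1 : Matrix (Fin n) (Fin n) ℂ)))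
    (β : Fin r → ℝ → Matrix (Fin p) (Fin m₁ ⊕ Fin m₂) ℂ)
    (hβ : ∀ k, Continuous (β k))
    (P : ℝ → Matrix (Fin n) (Fin m₁ ⊕ Fin m₂) ℂ)
    (S : ℝ → Matrix (Fin n) (Fin n) ℂ)
    (hP : ∀ x : ℝ, HasDerivAt P
      (-(Complex.I • ∑ k : Fin r,
        (A - (c k : ℂ) • 1)⁻¹ * P x * (Jmat m₁ m₂ * ((β k x)ᴴ * β k x)))) x)
    (hS : ∀ x : ℝ, HasDerivAt S
      (-(∑ k : Fin r,
        (A - (c k : ℂ) • 1)⁻¹ * P x * (Jmat m₁ m₂ * ((β k x)ᴴ * β k x)) * Jmat m₁ m₂ *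
          (P x)ᴴ * (Aᴴ - (c k : ℂ) • 1)⁻¹)) x)
    (hS0 : A * S 0 - S 0 * Aᴴ = Complex.I • (P 0 * Jmat m₁ m₂ * (P 0)ᴴ))
    (hS0h : (S 0)ᴴ = S 0)
    (𝓘 : Set ℝ) (h0 : (0 : ℝ) ∈ 𝓘) (hSinv : ∀ x ∈ 𝓘, IsUnit (S x)) :
    ∀ x ∈ 𝓘, HasDerivAt (fun t => Jmat m₁ m₂ * (P t)ᴴ * (S t)⁻¹)
      (Complex.I • ∑ k : Fin r,
        Jmat m₁ m₂ * Htil c A β P S k x * (Jmat m₁ m₂ * (P x)ᴴ * (S x)⁻¹) *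
          (A - (c k : ℂ) • 1)⁻¹) x := by
  have hJ : (Jmat m₁ m₂)ᴴ = Jmat m₁ m₂ := Jmat_conjTranspose m₁ m₂
  have hJJ : Jmat m₁ m₂ * Jmat m₁ m₂ = 1 := Jmat_mul_Jmat m₁ m₂
  have hAH : ∀ k, (A - (c k : ℂ) • 1)ᴴ = Aᴴ - (c k : ℂ) • 1 := by
    intro k
    simp [Matrix.conjTranspose_smul, Complex.star_def, Complex.conj_ofReal]
  have hAHu : ∀ k, IsUnit (Aᴴ - (c k : ℂ) • (1 : Matrix (Fin n) (Fin n) ℂ)) := by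
    intro k
    rw [← hAH k]
    exact (Matrix.isUnit_conjTranspose _).2 (hA k)
  have hRs : ∀ k, ((A - (c k : ℂ) • 1)⁻¹)ᴴ = (Aᴴ - (c k : ℂ) • 1)⁻¹ := by
    intro k
    rw [Matrix.conjTranspose_nonsing_inv, hAH k]
  have hcR : ∀ k, (A - (c k : ℂ) • 1) * (A - (c k : ℂ) • 1)⁻¹ = 1 := fun k =>
    Matrix.mul_nonsing_inv _ ((Matrix.isUnit_iff_isUnit_det _).1 (hA k))
  have hRc : ∀ k, (A - (c k : ℂ) • 1)⁻¹ * (A - (c k : ℂ) • 1) = 1 := fun k =>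
    Matrix.nonsing_inv_mul _ ((Matrix.isUnit_iff_isUnit_det _).1 (hA k))
  have hcRs : ∀ k, (Aᴴ - (c k : ℂ) • 1) * (Aᴴ - (c k : ℂ) • 1)⁻¹ = 1 := fun k =>
    Matrix.mul_nonsing_inv _ ((Matrix.isUnit_iff_isUnit_det _).1 (hAHu k))
  have hRsc : ∀ k, (Aᴴ - (c k : ℂ) • 1)⁻¹ * (Aᴴ - (c k : ℂ) • 1) = 1 := fun k =>
    Matrix.nonsing_inv_mul _ ((Matrix.isUnit_iff_isUnit_det _).1 (hAHu k))
  have hHh : ∀ k (t : ℝ), ((β k t)ᴴ * β k t)ᴴ = (β k t)ᴴ * β k t := by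
    intro k t; simp [Matrix.conjTranspose_mul]
  have hRsH : ∀ k, ((Aᴴ - (c k : ℂ) • 1)⁻¹)ᴴ = (A - (c k : ℂ) • 1)⁻¹ := by
    intro k; rw [← hRs k, Matrix.conjTranspose_conjTranspose]
  -- S is Hermitian everywhere
  have hermS : ∀ t, (S t)ᴴ = S t := by
    have hz : ∀ t, HasDerivAt (fun s => (S s)ᴴ - S s) 0 t := by
      intro t
      have h1 := ((hS t).conjTranspose).sub (hS t)
      have h2 : (-(∑ k : Fin r,
          (A - (c k : ℂ) • 1)⁻¹ * P t * (Jmat m₁ m₂ * ((β k t)ᴴ * β k t)) * Jmat m₁ m₂ *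
            (P t)ᴴ * (Aᴴ - (c k : ℂ) • 1)⁻¹))ᴴ - (-(∑ k : Fin r,
          (A - (c k : ℂ) • 1)⁻¹ * P t * (Jmat m₁ m₂ * ((β k t)ᴴ * β k t)) * Jmat m₁ m₂ *
            (P t)ᴴ * (Aᴴ - (c k : ℂ) • 1)⁻¹)) = 0 := by
        rw [sub_eq_zero]
        simp only [Matrix.conjTranspose_neg, Matrix.conjTranspose_sum, neg_inj]
        refine Finset.sum_congr rfl fun k _ => ?_
        simp only [Matrix.conjTranspose_mul, Matrix.conjTranspose_conjTranspose,
          hJ, Matrix.mul_assoc]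
        rw [hRsH k, hRs k]
      exact h2 ▸ h1
    intro t
    have h := matrix_const_of_hasDerivAt_zero hz t
    rw [hS0h, sub_self] at h
    exact sub_eq_zero.1 h
  have hP' : ∀ t, HasDerivAt P (-(Complex.I • ∑ k : Fin r, gW c A β P k t)) t := hP
  have hS' : ∀ t, HasDerivAt S (-(∑ k : Fin r, gT c A β P k t)) t := hS
  have cA : ∀ k (Z : Matrix (Fin n) (Fin n) ℂ),
      A * ((A - (c k : ℂ) • 1)⁻¹ * Z)
        = Z + (c k : ℂ) • ((A - (c k : ℂ) • 1)⁻¹ * Z) := by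
    intro k Z
    calc A * ((A - (c k : ℂ) • 1)⁻¹ * Z)
        = ((A - (c k : ℂ) • 1) + (c k : ℂ) • 1) * ((A - (c k : ℂ) • 1)⁻¹ * Z) := by
          rw [sub_add_cancel]
      _ = Z + (c k : ℂ) • ((A - (c k : ℂ) • 1)⁻¹ * Z) := by
          rw [Matrix.add_mul, ← Matrix.mul_assoc, hcR k, Matrix.one_mul,
            Matrix.smul_mul, Matrix.one_mul]
  have cAH : ∀ k, (Aᴴ - (c k : ℂ) • 1)⁻¹ * Aᴴ
      = 1 + (c k : ℂ) • (Aᴴ - (c k : ℂ) • 1)⁻¹ := by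
    intro k
    calc (Aᴴ - (c k : ℂ) • 1)⁻¹ * Aᴴ
        = (Aᴴ - (c k : ℂ) • 1)⁻¹ * ((Aᴴ - (c k : ℂ) • 1) + (c k : ℂ) • 1) := by
          rw [sub_add_cancel]
      _ = 1 + (c k : ℂ) • (Aᴴ - (c k : ℂ) • 1)⁻¹ := by
          rw [Matrix.mul_add, hRsc k, Matrix.mul_smul, Matrix.mul_one]
  have hgWH : ∀ k (t : ℝ), (gW c A β P k t)ᴴ
      = (β k t)ᴴ * β k t * (Jmat m₁ m₂ * ((P t)ᴴ * (Aᴴ - (c k : ℂ) • 1)⁻¹)) := by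
    intro k t
    simp only [gW, Matrix.conjTranspose_mul, Matrix.conjTranspose_conjTranspose, hJ,
      Matrix.mul_assoc]
    rw [hRs k]
  have perk : ∀ k (t : ℝ),
      -(A * gT c A β P k t) + gT c A β P k t * Aᴴ
        - gW c A β P k t * Jmat m₁ m₂ * (P t)ᴴ
        + P t * Jmat m₁ m₂ * (gW c A β P k t)ᴴ = 0 := by
    intro k t
    rw [hgWH k t]
    simp only [gT, gW, Matrix.mul_assoc, cA, cAH]
    simp only [Matrix.mul_add, Matrix.add_mul, Matrix.mul_one, Matrix.one_mul,
      Matrix.mul_smul, Matrix.smul_mul, Matrix.mul_assoc]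
    module
  -- the Lyapunov identity propagates
  have lyap : ∀ t, A * S t - S t * Aᴴ = Complex.I • (P t * Jmat m₁ m₂ * (P t)ᴴ) := by
    have hz : ∀ t, HasDerivAt
        (fun s => A * S s - S s * Aᴴ - Complex.I • (P s * Jmat m₁ m₂ * (P s)ᴴ)) 0 t := by
      intro t
      have h1 : HasDerivAt (fun s => A * S s) (A * -(∑ k : Fin r, gT c A β P k t)) t := by
        simpa using (hasDerivAt_const t A).matmul (hS' t)
      have h2 : HasDerivAt (fun s => S s * Aᴴ) (-(∑ k : Fin r, gT c A β P k t) * Aᴴ) t := by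
        simpa using (hS' t).matmul (hasDerivAt_const t Aᴴ)
      have h3 : HasDerivAt (fun s => P s * Jmat m₁ m₂ * (P s)ᴴ)
          ((-(Complex.I • ∑ k : Fin r, gW c A β P k t)) * Jmat m₁ m₂ * (P t)ᴴ
            + P t * Jmat m₁ m₂ * (-(Complex.I • ∑ k : Fin r, gW c A β P k t))ᴴ) t := by
        have := ((hP' t).matmul (hasDerivAt_const t (Jmat m₁ m₂))).matmul
          ((hP' t).conjTranspose)
        simpa [Matrix.add_mul] using this
      have h4 := (h1.sub h2).sub (h3.const_smul Complex.I)
      have hzero : A * -(∑ k : Fin r, gT c A β P k t)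
          - (-(∑ k : Fin r, gT c A β P k t)) * Aᴴ
          - Complex.I • ((-(Complex.I • ∑ k : Fin r, gW c A β P k t)) * Jmat m₁ m₂ * (P t)ᴴ
            + P t * Jmat m₁ m₂ * (-(Complex.I • ∑ k : Fin r, gW c A β P k t))ᴴ) = 0 := by
        have e1 : A * -(∑ k : Fin r, gT c A β P k t)
            = ∑ k : Fin r, -(A * gT c A β P k t) := by
          rw [Matrix.mul_neg, Finset.mul_sum, ← Finset.sum_neg_distrib]
        have e2 : (-(∑ k : Fin r, gT c A β P k t)) * Aᴴ
            = ∑ k : Fin r, -(gT c A β P k t * Aᴴ) := by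
          rw [Matrix.neg_mul, Finset.sum_mul, ← Finset.sum_neg_distrib]
        have lemA : ∀ (M : Matrix (Fin n) (Fin m₁ ⊕ Fin m₂) ℂ)
            (N : Matrix (Fin m₁ ⊕ Fin m₂) (Fin n) ℂ),
            Complex.I • (-(Complex.I • M) * N) = M * N := by
          intro M N
          rw [Matrix.neg_mul, Matrix.smul_mul, smul_neg, smul_smul, Complex.I_mul_I,
            neg_smul, one_smul, neg_neg]
        have lemB : ∀ (N : Matrix (Fin n) (Fin m₁ ⊕ Fin m₂) ℂ)
            (M : Matrix (Fin n) (Fin m₁ ⊕ Fin m₂) ℂ),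
            Complex.I • (N * (-(Complex.I • M))ᴴ) = -(N * Mᴴ) := by
          intro N M
          rw [Matrix.conjTranspose_neg, Matrix.conjTranspose_smul, Complex.star_def,
            Complex.conj_I, neg_smul, neg_neg, Matrix.mul_smul, smul_smul,
            Complex.I_mul_I, neg_one_smul]
        have e3 : Complex.I • ((-(Complex.I • ∑ k : Fin r, gW c A β P k t)) * Jmat m₁ m₂ * (P t)ᴴ
              + P t * Jmat m₁ m₂ * (-(Complex.I • ∑ k : Fin r, gW c A β P k t))ᴴ)
            = ∑ k : Fin r, (gW c A β P k t * Jmat m₁ m₂ * (P t)ᴴ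
              - P t * Jmat m₁ m₂ * (gW c A β P k t)ᴴ) := by
          rw [smul_add,
            Matrix.mul_assoc (-(Complex.I • ∑ k : Fin r, gW c A β P k t)) (Jmat m₁ m₂) ((P t)ᴴ),
            lemA, lemB, Matrix.sum_mul, Matrix.conjTranspose_sum, Matrix.mul_sum,
            ← Finset.sum_neg_distrib, ← Finset.sum_add_distrib]
          exact Finset.sum_congr rfl fun k _ => by
            simp [sub_eq_add_neg, Matrix.mul_assoc]
        rw [e1, e2, e3, ← Finset.sum_sub_distrib, ← Finset.sum_sub_distrib]
        refine Finset.sum_eq_zero fun k _ => ?_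
        rw [← perk k t]
        abel
      exact hzero ▸ h4
    intro t
    have h := matrix_const_of_hasDerivAt_zero hz t
    have h0 : A * S 0 - S 0 * Aᴴ - Complex.I • (P 0 * Jmat m₁ m₂ * (P 0)ᴴ) = 0 :=
      sub_eq_zero.2 hS0
    rw [h0] at h
    exact sub_eq_zero.1 h
  intro x hx
  have hSx : IsUnit (S x) := hSinv x hx
  have hdS : IsUnit (S x).det := (Matrix.isUnit_iff_isUnit_det _).1 hSx
  have hQS : (S x)⁻¹ * S x = 1 := Matrix.nonsing_inv_mul _ hdS
  have hSQ : S x * (S x)⁻¹ = 1 := Matrix.mul_nonsing_inv _ hdS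
  have hQh : ((S x)⁻¹)ᴴ = (S x)⁻¹ := by
    rw [Matrix.conjTranspose_nonsing_inv, hermS x]
  have hJJ' : ∀ {κ : Type} (X : Matrix (Fin m₁ ⊕ Fin m₂) κ ℂ),
      Jmat m₁ m₂ * (Jmat m₁ m₂ * X) = X := by
    intro κ X; rw [← Matrix.mul_assoc, hJJ, Matrix.one_mul]
  -- the key intertwining identity
  have key : ∀ k, (wA A P S x ((c k : ℂ)))ᴴ
        * ((P x)ᴴ * ((S x)⁻¹ * (A - (c k : ℂ) • 1)⁻¹))
      = (P x)ᴴ * ((Aᴴ - (c k : ℂ) • 1)⁻¹ * (S x)⁻¹) := by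
    intro k
    have hwH : (wA A P S x ((c k : ℂ)))ᴴ
        = 1 + Complex.I • ((P x)ᴴ * ((Aᴴ - (c k : ℂ) • 1)⁻¹
            * ((S x)⁻¹ * (P x * Jmat m₁ m₂)))) := by
      simp only [wA, Matrix.conjTranspose_sub, Matrix.conjTranspose_one,
        Matrix.conjTranspose_smul, Complex.star_def, Complex.conj_I,
        Matrix.conjTranspose_mul, Matrix.conjTranspose_conjTranspose, hQh, hJ,
        neg_smul, sub_neg_eq_add, Matrix.mul_assoc]
      rw [hRs k]
    have hmid : Complex.I • (P x * (Jmat m₁ m₂ * (P x)ᴴ)) = A * S x - S x * Aᴴ := by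
      rw [lyap x, Matrix.mul_assoc]
    have hsplitA : A * S x - S x * Aᴴ
        = (A - (c k : ℂ) • 1) * S x - S x * (Aᴴ - (c k : ℂ) • 1) := by
      rw [Matrix.sub_mul, Matrix.mul_sub, Matrix.smul_mul, Matrix.one_mul,
        Matrix.mul_smul, Matrix.mul_one]
      abel
    rw [hwH, Matrix.add_mul, Matrix.one_mul, Matrix.smul_mul]
    have e : Complex.I • ((P x)ᴴ * ((Aᴴ - (c k : ℂ) • 1)⁻¹
            * ((S x)⁻¹ * (P x * Jmat m₁ m₂)))
          * ((P x)ᴴ * ((S x)⁻¹ * (A - (c k : ℂ) • 1)⁻¹)))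
        = (P x)ᴴ * ((Aᴴ - (c k : ℂ) • 1)⁻¹ * ((S x)⁻¹
          * ((Complex.I • (P x * (Jmat m₁ m₂ * (P x)ᴴ)))
            * ((S x)⁻¹ * (A - (c k : ℂ) • 1)⁻¹)))) := by
      simp only [Matrix.mul_smul, Matrix.smul_mul, Matrix.mul_assoc]
    rw [e, hmid, hsplitA, Matrix.sub_mul, Matrix.mul_sub, Matrix.mul_sub, Matrix.mul_sub]
    -- now simplify the two pieces
    have p1 : (A - (c k : ℂ) • 1) * S x * ((S x)⁻¹ * (A - (c k : ℂ) • 1)⁻¹)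
        = (1 : Matrix (Fin n) (Fin n) ℂ) := by
      rw [Matrix.mul_assoc, ← Matrix.mul_assoc (S x), hSQ, Matrix.one_mul, hcR k]
    have p2 : (Aᴴ - (c k : ℂ) • 1)⁻¹ * ((S x)⁻¹ * (S x * (Aᴴ - (c k : ℂ) • 1)
          * ((S x)⁻¹ * (A - (c k : ℂ) • 1)⁻¹)))
        = (S x)⁻¹ * (A - (c k : ℂ) • 1)⁻¹ := by
      rw [Matrix.mul_assoc (S x), ← Matrix.mul_assoc ((S x)⁻¹) (S x), hQS,
        Matrix.one_mul, ← Matrix.mul_assoc, hRsc k, Matrix.one_mul]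
    rw [p1, Matrix.mul_one, p2]
    abel
  -- rewrite each summand of the right-hand side
  have rterm : ∀ k, Jmat m₁ m₂ * Htil c A β P S k x
        * (Jmat m₁ m₂ * (P x)ᴴ * (S x)⁻¹) * (A - (c k : ℂ) • 1)⁻¹
      = wA A P S x ((c k : ℂ)) * (Jmat m₁ m₂ * ((β k x)ᴴ * (β k x
          * (Jmat m₁ m₂ * ((P x)ᴴ * ((Aᴴ - (c k : ℂ) • 1)⁻¹ * (S x)⁻¹)))))) := by
    intro k
    unfold Htil betaTil
    simp only [Matrix.conjTranspose_mul, Matrix.conjTranspose_conjTranspose, hJ,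
      Matrix.mul_assoc, hJJ']
    rw [key k]
  -- the derivative obtained from the product/inverse rules
  have hD : HasDerivAt (fun t => Jmat m₁ m₂ * (P t)ᴴ * (S t)⁻¹)
      (Jmat m₁ m₂ * (-(Complex.I • ∑ k : Fin r, gW c A β P k x))ᴴ * (S x)⁻¹
        + Jmat m₁ m₂ * (P x)ᴴ
          * -((S x)⁻¹ * (-(∑ k : Fin r, gT c A β P k x)) * (S x)⁻¹)) x := by
    have := ((hasDerivAt_const x (Jmat m₁ m₂)).matmul (hP' x).conjTranspose).matmul
      (hasDerivAt_matrix_inv (hS' x) hSx)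
    simpa [Matrix.add_mul, Matrix.mul_assoc] using this
  have heq : Jmat m₁ m₂ * (-(Complex.I • ∑ k : Fin r, gW c A β P k x))ᴴ * (S x)⁻¹
        + Jmat m₁ m₂ * (P x)ᴴ
          * -((S x)⁻¹ * (-(∑ k : Fin r, gT c A β P k x)) * (S x)⁻¹)
      = Complex.I • ∑ k : Fin r,
          Jmat m₁ m₂ * Htil c A β P S k x * (Jmat m₁ m₂ * (P x)ᴴ * (S x)⁻¹) *
            (A - (c k : ℂ) • 1)⁻¹ := by
    have hPdH : (-(Complex.I • ∑ k : Fin r, gW c A β P k x))ᴴ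
        = Complex.I • ∑ k : Fin r, (gW c A β P k x)ᴴ := by
      simp [Matrix.conjTranspose_neg, Matrix.conjTranspose_smul, Complex.star_def,
        Complex.conj_I, Matrix.conjTranspose_sum, neg_smul, neg_neg]
    rw [hPdH]
    simp only [Matrix.mul_neg, Matrix.neg_mul, neg_neg, Matrix.mul_smul, Matrix.smul_mul,
      Matrix.mul_sum, Matrix.sum_mul, Finset.smul_sum]
    rw [← Finset.sum_add_distrib]
    refine Finset.sum_congr rfl fun k _ => ?_
    rw [rterm k, hgWH k x]
    simp only [wA, gT, gW, Matrix.sub_mul, Matrix.one_mul, Matrix.smul_mul, Matrix.mul_smul,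
      smul_smul, Complex.I_mul_I, neg_one_smul, sub_neg_eq_add, smul_sub,
      Matrix.mul_assoc]
  exact heq ▸ hD
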